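/- arXiv:1409.0799 — 2 statements merged into one kernel-verified Lean document; each statement's English description precedes it below -/
import Mathlib

section
/- Let K be an algebraically closed field of characteristic 0, let R = K[T1,T2,T4,T6,T7,T8], and let g4, g6 ∈ K[T3,T4,T5] be homogeneous of degrees 4 and 6 respectively. Then the polynomial g := T1^2 + T2^3 + T2·g4(T4 - T7T8 + T6T8, T4, T4 - T7T8) + g6(T4 - T7T8 + T6T8, T4, T4 - T7T8) is irreducible in R. -/
open MvPolynomial


open Polynomial in
private lemma quad_coeffs {A : Type*} [CommRing A] (p q r c : A)
    (h : (Polynomial.X : A[X]) ^ 2 + Polynomial.C c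
      = Polynomial.C p * Polynomial.X ^ 2 + Polynomial.C q * Polynomial.X + Polynomial.C r) :
    p = 1 ∧ q = 0 ∧ r = c := by
  refine ⟨?_, ?_, ?_⟩
  · have := congrArg (fun f => Polynomial.coeff f 2) h
    simpa using this.symm
  · have := congrArg (fun f => Polynomial.coeff f 1) h
    simpa using this.symm
  · have := congrArg (fun f => Polynomial.coeff f 0) h
    simpa using this.symm

open Polynomial in
private lemma quad_irred {A : Type*} [CommRing A] [IsDomain A] (c : A)
    (h : ∀ r : A, c ≠ -(r^2)) :
    Irreducible (Polynomial.X ^ 2 + Polynomial.C c : A[X]) := by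
  have hm : (Polynomial.X ^ 2 + Polynomial.C c : A[X]).Monic :=
    monic_X_pow_add_C c (by norm_num)
  have hdeg : (Polynomial.X ^ 2 + Polynomial.C c : A[X]).natDegree = 2 := by
    compute_degree!
  constructor
  · exact fun hu => by
      have := Polynomial.natDegree_eq_zero_of_isUnit hu
      omega
  · intro a b hab
    have ha0 : a ≠ 0 := by rintro rfl; simp at hab; exact hm.ne_zero (by simp [hab])
    have hb0 : b ≠ 0 := by rintro rfl; simp at hab; exact hm.ne_zero (by simp [hab])
    have hdab : a.natDegree + b.natDegree = 2 := by
      rw [← Polynomial.natDegree_mul ha0 hb0, ← hab, hdeg]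
    have hlead : a.leadingCoeff * b.leadingCoeff = 1 := by
      rw [← Polynomial.leadingCoeff_mul, ← hab]; exact hm
    rcases Nat.lt_or_ge a.natDegree 1 with ha1 | ha1
    · left
      have hca : a = Polynomial.C (a.coeff 0) := Polynomial.eq_C_of_natDegree_eq_zero (by omega)
      rw [hca]
      apply Polynomial.isUnit_C.2
      refine IsUnit.of_mul_eq_one b.leadingCoeff ?_
      rwa [hca, Polynomial.leadingCoeff_C] at hlead
    rcases Nat.lt_or_ge b.natDegree 1 with hb1 | hb1
    · right
      have hcb : b = Polynomial.C (b.coeff 0) := Polynomial.eq_C_of_natDegree_eq_zero (by omega)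
      rw [hcb]
      apply Polynomial.isUnit_C.2
      refine IsUnit.of_mul_eq_one a.leadingCoeff ?_
      rw [hcb, Polynomial.leadingCoeff_C] at hlead
      rwa [mul_comm] at hlead
    exfalso
    have ha : a = Polynomial.C (a.coeff 1) * Polynomial.X + Polynomial.C (a.coeff 0) :=
      Polynomial.eq_X_add_C_of_natDegree_le_one (by omega)
    have hb : b = Polynomial.C (b.coeff 1) * Polynomial.X + Polynomial.C (b.coeff 0) :=
      Polynomial.eq_X_add_C_of_natDegree_le_one (by omega)
    rw [ha, hb] at hab
    have hab' : (Polynomial.X : A[X]) ^ 2 + Polynomial.C c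
        = Polynomial.C (a.coeff 1 * b.coeff 1) * Polynomial.X ^ 2
          + Polynomial.C (a.coeff 1 * b.coeff 0 + b.coeff 1 * a.coeff 0) * Polynomial.X
          + Polynomial.C (a.coeff 0 * b.coeff 0) := by
      rw [hab]; simp only [Polynomial.C_mul, Polynomial.C_add]; ring
    obtain ⟨h2, h1, h0⟩ := quad_coeffs _ _ _ _ hab'
    exact h (b.coeff 1 * a.coeff 0)
      (by linear_combination -h0 - (a.coeff 0 * b.coeff 0) * h2 + (a.coeff 0 * b.coeff 1) * h1)

/-- With K algebraically closed of characteristic 0 and g4, g6 homogeneous of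
degrees 4 and 6 in three variables, the polynomial
g = T1^2 + T2^3 + T2·g4(T4-T7T8+T6T8, T4, T4-T7T8) + g6(T4-T7T8+T6T8, T4, T4-T7T8)
is irreducible in K[T1,T2,T4,T6,T7,T8].  Variables: X 0 = T1, X 1 = T2, X 2 = T4,
X 3 = T6, X 4 = T7, X 5 = T8. -/
theorem stmt_0 {K : Type*} [Field K] [IsAlgClosed K] [CharZero K]
    (g4 g6 : MvPolynomial (Fin 3) K)
    (hg4 : g4.IsHomogeneous 4) (hg6 : g6.IsHomogeneous 6) :
    Irreducible
      ((X 0 : MvPolynomial (Fin 6) K) ^ 2 + X 1 ^ 3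
        + X 1 * aeval ![X 2 - X 4 * X 5 + X 3 * X 5, X 2, X 2 - X 4 * X 5] g4
        + aeval ![X 2 - X 4 * X 5 + X 3 * X 5, X 2, X 2 - X 4 * X 5] g6) := by
  set e := MvPolynomial.finSuccEquiv K 5 with he
  set v : Fin 3 → MvPolynomial (Fin 6) K :=
    ![X 2 - X 4 * X 5 + X 3 * X 5, X 2, X 2 - X 4 * X 5] with hv
  set w : Fin 3 → MvPolynomial (Fin 5) K :=
    ![X 1 - X 3 * X 4 + X 2 * X 4, X 1, X 1 - X 3 * X 4] with hw
  set c : MvPolynomial (Fin 5) K :=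
    X 0 ^ 3 + X 0 * MvPolynomial.aeval w g4 + MvPolynomial.aeval w g6 with hc
  have e1 : e (X 1 : MvPolynomial (Fin 6) K) = Polynomial.C (X 0) := by
    rw [show (1 : Fin 6) = Fin.succ 0 from rfl, he, finSuccEquiv_X_succ]
  have e2 : e (X 2 : MvPolynomial (Fin 6) K) = Polynomial.C (X 1) := by
    rw [show (2 : Fin 6) = Fin.succ 1 from rfl, he, finSuccEquiv_X_succ]
  have e3 : e (X 3 : MvPolynomial (Fin 6) K) = Polynomial.C (X 2) := by
    rw [show (3 : Fin 6) = Fin.succ 2 from rfl, he, finSuccEquiv_X_succ]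
  have e4 : e (X 4 : MvPolynomial (Fin 6) K) = Polynomial.C (X 3) := by
    rw [show (4 : Fin 6) = Fin.succ 3 from rfl, he, finSuccEquiv_X_succ]
  have e5 : e (X 5 : MvPolynomial (Fin 6) K) = Polynomial.C (X 4) := by
    rw [show (5 : Fin 6) = Fin.succ 4 from rfl, he, finSuccEquiv_X_succ]
  have e0 : e (X 0 : MvPolynomial (Fin 6) K) = Polynomial.X := by
    rw [he]; exact finSuccEquiv_X_zero
  have hev : ∀ p : MvPolynomial (Fin 3) K,
      e (MvPolynomial.aeval v p) = Polynomial.C (MvPolynomial.aeval w p) := by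
    intro p
    have hfun : (fun i => e.toAlgHom (v i)) = fun i => (Polynomial.CAlgHom (R := K)) (w i) := by
      funext i
      show e (v i) = Polynomial.C (w i)
      fin_cases i <;>
        simp [hv, hw, e1, e2, e3, e4, e5, map_sub, map_add, map_mul]
    rw [show e ((MvPolynomial.aeval v) p) = e.toAlgHom ((MvPolynomial.aeval v) p) from rfl,
      comp_aeval_apply (f := v) e.toAlgHom p, hfun,
      ← comp_aeval_apply (f := w) (Polynomial.CAlgHom (R := K)) p]
    rfl
  have key : e ((X 0 : MvPolynomial (Fin 6) K) ^ 2 + X 1 ^ 3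
        + X 1 * aeval v g4 + aeval v g6)
      = Polynomial.X ^ 2 + Polynomial.C c := by
    rw [map_add, map_add, map_add, map_pow, map_pow, map_mul, e0, e1, hev, hev, hc]
    push_cast [map_add, map_mul, map_pow, Polynomial.C_add, Polynomial.C_mul, Polynomial.C_pow]
    ring
  refine (MulEquiv.irreducible_iff e).mp (key.symm ▸ ?_)
  apply quad_irred
  intro r hr
  have hψ := congrArg (MvPolynomial.aeval (R := K)
    (fun i : Fin 5 => if i = 0 then (Polynomial.X : Polynomial K) else 0)) hr
  set ψ := MvPolynomial.aeval (R := K)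
    (fun i : Fin 5 => if i = 0 then (Polynomial.X : Polynomial K) else 0) with hψdef
  have hzero : ∀ p : MvPolynomial (Fin 3) K, p.IsHomogeneous 4 ∨ p.IsHomogeneous 6 →
      ψ (MvPolynomial.aeval w p) = 0 := by
    intro p hp
    rw [comp_aeval_apply (f := w) ψ p]
    have : (fun i => ψ (w i)) = fun _ : Fin 3 => (0 : Polynomial K) := by
      funext i
      fin_cases i <;> simp [hw, hψdef]
    rw [this]
    have hcc : MvPolynomial.constantCoeff p = 0 := by
      rcases hp with hp | hp
      · exact hp.coeff_eq_zero (by simp [map_zero])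
      · exact hp.coeff_eq_zero (by simp [map_zero])
    calc (MvPolynomial.aeval (fun _ : Fin 3 => (0 : Polynomial K))) p
        = algebraMap K (Polynomial K) (MvPolynomial.constantCoeff p) := by
          rw [show (fun _ : Fin 3 => (0 : Polynomial K)) = (0 : Fin 3 → Polynomial K) from rfl]
          exact MvPolynomial.aeval_zero p
      _ = 0 := by rw [hcc, map_zero]
  rw [hc] at hψ
  rw [map_neg, map_pow, map_add, map_add, map_mul, map_pow,
    hzero g4 (Or.inl hg4), hzero g6 (Or.inr hg6)] at hψ
  simp only [hψdef, MvPolynomial.aeval_X, if_pos rfl, if_true, mul_zero, add_zero] at hψ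
  have hdeg := congrArg Polynomial.natDegree hψ
  rw [Polynomial.natDegree_X_pow, Polynomial.natDegree_neg, Polynomial.natDegree_pow] at hdeg
  omega
end

section
/- Let K be an algebraically closed field of characteristic 0 and let f ∈ K[T1,T2,T3] be homogeneous of degree 3 with V(f, T4) ⊆ P^3 smooth. Then the ideal ⟨T4 − T5T7, f − T6T7⟩ ⊆ K[T1,…,T7] is prime, and after substituting T4 = T5T7 the ring K[T1,T2,T3,T5,T6,T7]/⟨f − T6T7⟩ is an integral domain. -/
open MvPolynomial

private lemma aux_prime_X {K : Type*} [Field K] {n : ℕ} (i : Fin (n + 1)) :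
    Prime (X i : MvPolynomial (Fin (n + 1)) K) := by
  let e := (renameEquiv K (Equiv.swap i 0)).trans (MvPolynomial.finSuccEquiv K n)
  rw [← MulEquiv.prime_iff e.toRingEquiv.toMulEquiv]
  have he : e (X i) = Polynomial.X := by
    simp [e, renameEquiv_apply, Equiv.swap_apply_left, finSuccEquiv_X_zero]
  rw [show e.toRingEquiv.toMulEquiv (X i) = Polynomial.X from he]
  exact Polynomial.prime_X

private lemma aux_finSuccEquiv_rename_succ {K : Type*} [CommSemiring K] {n : ℕ}
    (g : MvPolynomial (Fin n) K) :
    MvPolynomial.finSuccEquiv K n (rename Fin.succ g) = Polynomial.C g := by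
  have h : (MvPolynomial.finSuccEquiv K n).toAlgHom.comp (rename Fin.succ) =
      (Polynomial.CAlgHom : MvPolynomial (Fin n) K →ₐ[K] _) := by
    apply MvPolynomial.algHom_ext
    intro i
    simp [finSuccEquiv_X_succ, Polynomial.CAlgHom]
  exact DFunLike.congr_fun h g

private lemma aux_prime_gen {K : Type*} [Field K] (f : MvPolynomial (Fin 3) K) (hf0 : f ≠ 0) :
    Prime (rename (Fin.castLE (by norm_num : (3:ℕ) ≤ 6)) f - X 4 * X 5 :
      MvPolynomial (Fin 6) K) := by
  rw [← MulEquiv.prime_iff (renameEquiv K (Equiv.swap (0 : Fin 6) 5)).toRingEquiv.toMulEquiv]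
  have h1 : (renameEquiv K (Equiv.swap (0 : Fin 6) 5))
      (rename (Fin.castLE (by norm_num : (3:ℕ) ≤ 6)) f - X 4 * X 5)
      = rename (Fin.succ ∘ (![4, 0, 1] : Fin 3 → Fin 5)) f - X 4 * X 0 := by
    have hc : (Equiv.swap (0 : Fin 6) 5) ∘ (Fin.castLE (by norm_num : (3:ℕ) ≤ 6))
        = Fin.succ ∘ (![4, 0, 1] : Fin 3 → Fin 5) := by
      funext i; fin_cases i <;> decide
    simp only [renameEquiv_apply, map_sub, map_mul, rename_rename, rename_X, hc]
    congr 1 <;> congr 1 <;> decide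
  rw [show (renameEquiv K (Equiv.swap (0 : Fin 6) 5)).toRingEquiv.toMulEquiv
      ((rename (Fin.castLE (by norm_num : (3:ℕ) ≤ 6))) f - X 4 * X 5)
      = rename (Fin.succ ∘ (![4, 0, 1] : Fin 3 → Fin 5)) f - X 4 * X 0 from h1]
  rw [← MulEquiv.prime_iff (MvPolynomial.finSuccEquiv K 5).toRingEquiv.toMulEquiv]
  have h4 : (4 : Fin 6) = Fin.succ (3 : Fin 5) := by decide
  have h2 : (MvPolynomial.finSuccEquiv K 5)
        (rename (Fin.succ ∘ (![4, 0, 1] : Fin 3 → Fin 5)) f - X 4 * X 0)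
      = Polynomial.C (rename (![4, 0, 1] : Fin 3 → Fin 5) f)
        - Polynomial.C (X 3) * Polynomial.X := by
    rw [map_sub, map_mul, ← rename_rename, aux_finSuccEquiv_rename_succ, h4,
      finSuccEquiv_X_succ, finSuccEquiv_X_zero]
  rw [show (MvPolynomial.finSuccEquiv K 5).toRingEquiv.toMulEquiv
      (rename (Fin.succ ∘ (![4, 0, 1] : Fin 3 → Fin 5)) f - X 4 * X 0)
      = Polynomial.C (rename (![4, 0, 1] : Fin 3 → Fin 5) f)
        - Polynomial.C (X 3) * Polynomial.X from h2]
  set f₅ := rename (![4, 0, 1] : Fin 3 → Fin 5) f with hf₅def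
  have hf₅0 : f₅ ≠ 0 := by
    intro h
    exact hf0 (rename_injective (![4, 0, 1] : Fin 3 → Fin 5) (by decide) (by simpa using h))
  have hnd : ¬ (X (3 : Fin 5) : MvPolynomial (Fin 5) K) ∣ f₅ := by
    intro hd
    have hmap := map_dvd (aeval (fun j : Fin 5 => if j = 3 then 0 else X j) :
        MvPolynomial (Fin 5) K →ₐ[K] MvPolynomial (Fin 5) K) hd
    rw [aeval_X, if_pos rfl] at hmap
    have heq : (aeval (fun j : Fin 5 => if j = 3 then 0 else X j)) f₅ = f₅ := by
      rw [hf₅def, aeval_rename]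
      have hcomp : ((fun j : Fin 5 => if j = 3 then (0 : MvPolynomial (Fin 5) K) else X j)
          ∘ (![4, 0, 1] : Fin 3 → Fin 5)) = X ∘ (![4, 0, 1] : Fin 3 → Fin 5) := by
        funext i; fin_cases i <;> rfl
      rw [hcomp]
      rw [← rename_eq_aeval]
    rw [heq] at hmap
    exact hf₅0 (zero_dvd_iff.mp hmap)
  have hprim : (Polynomial.C f₅ - Polynomial.C (X 3) * Polynomial.X :
      Polynomial (MvPolynomial (Fin 5) K)).IsPrimitive := by
    intro r hr
    rw [Polynomial.C_dvd_iff_dvd_coeff] at hr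
    have hr1 : r ∣ (X 3 : MvPolynomial (Fin 5) K) := by
      have := hr 1
      simpa using (dvd_neg.mp (by simpa using this))
    have hr0 : r ∣ f₅ := by simpa using hr 0
    obtain ⟨c, hc⟩ := hr1
    rcases (aux_prime_X (3 : Fin 5)).irreducible.isUnit_or_isUnit hc with h | h
    · exact h
    · exfalso
      have hXr : (X (3 : Fin 5) : MvPolynomial (Fin 5) K) ∣ r := by
        rw [hc]
        exact (h.mul_right_dvd).mpr dvd_rfl
      exact hnd (hXr.trans hr0)
  set F := FractionRing (MvPolynomial (Fin 5) K)
  have hinj : Function.Injective (algebraMap (MvPolynomial (Fin 5) K) F) :=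
    IsFractionRing.injective _ _
  have hmapirr : Irreducible (Polynomial.map (algebraMap (MvPolynomial (Fin 5) K) F)
      (Polynomial.C f₅ - Polynomial.C (X 3) * Polynomial.X)) := by
    have hX3 : algebraMap (MvPolynomial (Fin 5) K) F (X 3) ≠ 0 := by
      intro h
      exact MvPolynomial.X_ne_zero 3 (hinj (by rw [h, map_zero]))
    have hrw : Polynomial.map (algebraMap (MvPolynomial (Fin 5) K) F)
          (Polynomial.C f₅ - Polynomial.C (X 3) * Polynomial.X)
        = Polynomial.C (-(algebraMap (MvPolynomial (Fin 5) K) F (X 3))) * Polynomial.X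
          + Polynomial.C (algebraMap (MvPolynomial (Fin 5) K) F f₅) := by
      rw [Polynomial.map_sub, Polynomial.map_mul, Polynomial.map_C, Polynomial.map_C,
        Polynomial.map_X, Polynomial.C_neg]
      ring
    rw [hrw]
    exact Polynomial.irreducible_of_degree_eq_one
      (Polynomial.degree_linear (neg_ne_zero.mpr hX3))
  exact UniqueFactorizationMonoid.irreducible_iff_prime.mp
    (hprim.irreducible_of_irreducible_map_of_injective hinj hmapirr)

/-- Let f ∈ K[T1,T2,T3] be homogeneous of degree 3 with V(f,T4) ⊆ P^3
smooth (equivalently, the plane cubic V(f) ⊆ P^2 is smooth, encoded via the Jacobian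
criterion).  Then ⟨T4 − T5T7, f − T6T7⟩ ⊆ K[T1,…,T7] is prime, and after substituting
T4 = T5T7 the ring K[T1,T2,T3,T5,T6,T7]/⟨f − T6T7⟩ is an integral domain.
In the conclusion's first ideal the variables are X i = T(i+1) in Fin 7; in the second
quotient ring the six variables are indexed 0 = T1, 1 = T2, 2 = T3, 3 = T5, 4 = T6,
5 = T7. -/
theorem stmt_16 {K : Type*} [Field K] [IsAlgClosed K] [CharZero K]
    (f : MvPolynomial (Fin 3) K) (hf : f.IsHomogeneous 3)
    (hsm : ∀ y : Fin 3 → K, y ≠ 0 → eval y f = 0 → ∃ i, eval y (pderiv i f) ≠ 0) :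
    (Ideal.span
      ({X 3 - X 4 * X 6,
        rename (Fin.castLE (by norm_num : (3:ℕ) ≤ 7)) f - X 5 * X 6} :
        Set (MvPolynomial (Fin 7) K))).IsPrime
    ∧ IsDomain (MvPolynomial (Fin 6) K ⧸ Ideal.span
        ({rename (Fin.castLE (by norm_num : (3:ℕ) ≤ 6)) f - X 4 * X 5} :
          Set (MvPolynomial (Fin 6) K))) := by
  have hf0 : f ≠ 0 := by
    rintro rfl
    obtain ⟨i, hi⟩ := hsm (fun _ => 1) (by
      intro h
      simpa using congrFun h 0) (by simp)
    simp at hi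
  have hp : Prime (rename (Fin.castLE (by norm_num : (3:ℕ) ≤ 6)) f - X 4 * X 5 :
      MvPolynomial (Fin 6) K) := aux_prime_gen f hf0
  have hspan : (Ideal.span ({rename (Fin.castLE (by norm_num : (3:ℕ) ≤ 6)) f - X 4 * X 5} :
      Set (MvPolynomial (Fin 6) K))).IsPrime :=
    (Ideal.span_singleton_prime hp.ne_zero).mpr hp
  refine ⟨?_, ?_⟩
  · -- Part 1: eliminate the variable X 3 via the substitution X 3 ↦ X 4 * X 6.
    set u : Fin 7 → MvPolynomial (Fin 6) K :=
      fun i => if i = 0 then X 0 else if i = 1 then X 1 else if i = 2 then X 2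
        else if i = 3 then X 3 * X 5 else if i = 4 then X 3 else if i = 5 then X 4 else X 5
      with hu
    set v : Fin 6 → MvPolynomial (Fin 7) K :=
      fun i => if i = 0 then X 0 else if i = 1 then X 1 else if i = 2 then X 2
        else if i = 3 then X 4 else if i = 4 then X 5 else X 6
      with hv
    set s : Fin 7 → MvPolynomial (Fin 7) K :=
      fun i => if i = 3 then X 4 * X 6 else X i with hs
    have hvu : ∀ i : Fin 7, aeval v (u i) = s i := by
      intro i; fin_cases i <;> simp [hu, hv, hs]
    have hcompose : ∀ w : MvPolynomial (Fin 7) K, aeval v (aeval u w) = aeval s w := by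
      intro w
      rw [show (aeval s : MvPolynomial (Fin 7) K →ₐ[K] MvPolynomial (Fin 7) K)
          = (aeval v).comp (aeval u) by
        apply MvPolynomial.algHom_ext
        intro i
        rw [aeval_X, AlgHom.comp_apply, aeval_X]
        exact (hvu i).symm]
      rfl
    have hsub : ∀ w : MvPolynomial (Fin 7) K,
        w - aeval s w ∈ Ideal.span ({X 3 - X 4 * X 6} : Set (MvPolynomial (Fin 7) K)) := by
      intro w
      induction w using MvPolynomial.induction_on with
      | C a => simp [aeval_C, algebraMap_eq]
      | add p q hp' hq' =>
        rw [map_add]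
        have : p + q - (aeval s p + aeval s q) = (p - aeval s p) + (q - aeval s q) := by ring
        rw [this]; exact Ideal.add_mem _ hp' hq'
      | mul_X p i hp' =>
        rw [map_mul, aeval_X]
        have : p * X i - aeval s p * s i
            = (p - aeval s p) * X i + aeval s p * (X i - s i) := by ring
        rw [this]
        refine Ideal.add_mem _ (Ideal.mul_mem_right _ _ hp') ?_
        by_cases h : i = 3
        · subst h
          rw [hs]; simp only [if_pos rfl]
          exact Ideal.mul_mem_left _ _ (Ideal.subset_span rfl)
        · rw [hs]; simp only [if_neg h, sub_self, mul_zero]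
          exact Ideal.zero_mem _
    have hφgen2 : aeval u (rename (Fin.castLE (by norm_num : (3:ℕ) ≤ 7)) f - X 5 * X 6)
        = rename (Fin.castLE (by norm_num : (3:ℕ) ≤ 6)) f - X 4 * X 5 := by
      rw [map_sub, map_mul, aeval_X, aeval_X, aeval_rename]
      have hcomp : u ∘ (Fin.castLE (by norm_num : (3:ℕ) ≤ 7))
          = X ∘ (Fin.castLE (by norm_num : (3:ℕ) ≤ 6)) := by
        funext i; fin_cases i <;> simp [hu] <;> rfl
      rw [hcomp]
      rw [← rename_eq_aeval]
      congr 1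
    have hψgen : aeval v (rename (Fin.castLE (by norm_num : (3:ℕ) ≤ 6)) f - X 4 * X 5)
        = rename (Fin.castLE (by norm_num : (3:ℕ) ≤ 7)) f - X 5 * X 6 := by
      rw [map_sub, map_mul, aeval_X, aeval_X, aeval_rename]
      have hcomp : v ∘ (Fin.castLE (by norm_num : (3:ℕ) ≤ 6))
          = X ∘ (Fin.castLE (by norm_num : (3:ℕ) ≤ 7)) := by
        funext i; fin_cases i <;> simp [hv] <;> rfl
      rw [hcomp]
      rw [← rename_eq_aeval]
      congr 1
    have key : (Ideal.span
        ({X 3 - X 4 * X 6,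
          rename (Fin.castLE (by norm_num : (3:ℕ) ≤ 7)) f - X 5 * X 6} :
          Set (MvPolynomial (Fin 7) K)))
        = Ideal.comap ((aeval u : MvPolynomial (Fin 7) K →ₐ[K] MvPolynomial (Fin 6) K) :
            MvPolynomial (Fin 7) K →+* MvPolynomial (Fin 6) K)
          (Ideal.span ({rename (Fin.castLE (by norm_num : (3:ℕ) ≤ 6)) f - X 4 * X 5} :
            Set (MvPolynomial (Fin 6) K))) := by
      apply le_antisymm
      · rw [Ideal.span_le]
        rintro x (rfl | rfl)
        · simp only [SetLike.mem_coe, Ideal.mem_comap, RingHom.coe_coe]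
          rw [map_sub, map_mul, aeval_X, aeval_X, aeval_X]
          have h0 : u 3 - u 4 * u 6 = 0 := by simp [hu]
          rw [h0]
          exact Ideal.zero_mem _
        · simp only [SetLike.mem_coe, Ideal.mem_comap, RingHom.coe_coe]
          rw [hφgen2]
          exact Ideal.subset_span rfl
      · intro w hw
        rw [Ideal.mem_comap] at hw
        rw [Ideal.mem_span_singleton] at hw
        obtain ⟨r, hr0⟩ := hw
        have hr : aeval u w = (rename (Fin.castLE (by norm_num : (3:ℕ) ≤ 6)) f - X 4 * X 5) * r :=
          hr0
        have hw1 : w = (w - aeval s w) + aeval v (aeval u w) := by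
          rw [hcompose w]; ring
        rw [hw1, hr, map_mul, hψgen]
        refine Ideal.add_mem _ ?_ ?_
        · exact Ideal.span_mono (Set.singleton_subset_iff.mpr (Set.mem_insert _ _)) (hsub w)
        · exact Ideal.mul_mem_right _ _
            (Ideal.subset_span (Set.mem_insert_of_mem _ rfl))
    rw [key]
    exact hspan.comap _
  · exact Ideal.Quotient.isDomain _
end
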